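/- Let X be a locally compact (not necessarily abelian) topological group with the property that for every open neighbourhood U_e of the neutral element e there exists x_* ∈ U_e such that the set {x_*ⁿ : n ∈ ℕ} is not contained in any compact subset of X. If a family F ⊆ C₀(X) is equicontinuous at every point and equivanishing, then F is pointwise bounded (in fact, there exists a uniform bound M with ‖f‖_∞ ≤ M for all f ∈ F). -/

import Mathlib

open scoped ZeroAtInfty

/-- Let `X` be a locally compact (not necessarily abelian) group such that every open
neighbourhood of the neutral element contains an element `x_*` whose powers `x_*ⁿ` are not
contained in any compact set.  Then every family `F ⊆ C₀(X)` which is equicontinuous at every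
point and equivanishing is pointwise bounded; in fact it is uniformly bounded in norm. -/
theorem pointwise_bounded_of_equicontinuous_equivanishing
    {X : Type*} [Group X] [TopologicalSpace X] [IsTopologicalGroup X]
    [LocallyCompactSpace X] [T2Space X]
    (hX : ∀ U : Set X, IsOpen U → (1 : X) ∈ U →
      ∃ x, x ∈ U ∧ ∀ K : Set X, IsCompact K → ¬ (Set.range (fun n : ℕ => x ^ n) ⊆ K))
    (F : Set C₀(X, ℂ))
    (hFeq : ∀ x : X, ∀ ε > (0 : ℝ), ∃ U : Set X, IsOpen U ∧ x ∈ U ∧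
      ∀ y ∈ U, ∀ f ∈ F, ‖f y - f x‖ < ε)
    (hFvan : ∀ ε > (0 : ℝ), ∃ K : Set X, IsCompact K ∧ ∀ f ∈ F, ∀ x ∉ K, ‖f x‖ < ε) :
    (∀ x : X, ∃ M : ℝ, 0 < M ∧ ∀ f ∈ F, ‖f x‖ < M) ∧
      ∃ M : ℝ, ∀ f ∈ F, ‖f‖ ≤ M := by
  classical
  obtain ⟨K, hK, hKbound⟩ := hFvan 1 one_pos
  set A : Set X := {x | ∃ M : ℝ, 0 < M ∧ ∀ f ∈ F, ‖f x‖ < M} with hAdef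
  have hAopen : IsOpen A := by
    rw [isOpen_iff_mem_nhds]
    rintro x ⟨M, hM, hMf⟩
    obtain ⟨U, hU, hxU, hUf⟩ := hFeq x 1 one_pos
    refine Filter.mem_of_superset (hU.mem_nhds hxU) ?_
    intro y hy
    refine ⟨M + 1, by linarith, fun f hf => ?_⟩
    calc ‖f y‖ ≤ ‖f y - f x‖ + ‖f x‖ := by simpa using norm_add_le (f y - f x) (f x)
      _ < 1 + M := add_lt_add (hUf y hy f hf) (hMf f hf)
      _ = M + 1 := by ring
  have hBopen : IsOpen Aᶜ := by
    rw [isOpen_iff_mem_nhds]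
    intro x hx
    obtain ⟨U, hU, hxU, hUf⟩ := hFeq x 1 one_pos
    refine Filter.mem_of_superset (hU.mem_nhds hxU) ?_
    intro y hy hyA
    obtain ⟨M, hM, hMf⟩ := hyA
    refine hx ⟨M + 1, by linarith, fun f hf => ?_⟩
    calc ‖f x‖ ≤ ‖f x - f y‖ + ‖f y‖ := by simpa using norm_add_le (f x - f y) (f y)
      _ < 1 + M := by
          have : ‖f x - f y‖ = ‖f y - f x‖ := by rw [norm_sub_rev]
          rw [this]; exact add_lt_add (hUf y hy f hf) (hMf f hf)
      _ = M + 1 := by ring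
  have hcompl : Kᶜ ⊆ A := fun x hx => ⟨1, one_pos, fun f hf => hKbound f hf x hx⟩
  have hAuniv : ∀ x : X, x ∈ A := by
    by_contra h
    push_neg at h
    obtain ⟨b, hb⟩ := h
    have hBsubK : Aᶜ ⊆ K := fun x hx => by
      by_contra hxK; exact hx (hcompl hxK)
    have hBcompact : IsCompact (Aᶜ) :=
      hK.of_isClosed_subset hAopen.isClosed_compl hBsubK
    obtain ⟨V, hV, hVB⟩ :=
      compact_open_separated_mul_left hBcompact hBopen subset_rfl
    obtain ⟨V', hV'V, hV'open, h1V'⟩ := mem_nhds_iff.mp hV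
    obtain ⟨z, hzV', hz⟩ := hX V' hV'open h1V'
    have hpow : ∀ n : ℕ, z ^ n * b ∈ Aᶜ := by
      intro n
      induction n with
      | zero => simpa using hb
      | succ n ih =>
          have : z * (z ^ n * b) ∈ Aᶜ :=
            hVB (Set.mul_mem_mul (hV'V hzV') ih)
          rwa [pow_succ', mul_assoc]
    refine hz ((fun y => y * b⁻¹) '' Aᶜ)
      (hBcompact.image (continuous_mul_right b⁻¹)) ?_
    rintro _ ⟨n, rfl⟩
    exact ⟨z ^ n * b, hpow n, by simp [mul_assoc]⟩
  refine ⟨hAuniv, ?_⟩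
  -- uniform bound
  have hdata : ∀ x : X, ∃ p : ℝ × Set X, 0 < p.1 ∧ IsOpen p.2 ∧ x ∈ p.2 ∧
      ∀ y ∈ p.2, ∀ f ∈ F, ‖f y‖ < p.1 := by
    intro x
    obtain ⟨M, hM, hMf⟩ := hAuniv x
    obtain ⟨U, hU, hxU, hUf⟩ := hFeq x 1 one_pos
    refine ⟨(M + 1, U), by show (0:ℝ) < M + 1; linarith, hU, hxU, fun y hy f hf => ?_⟩
    calc ‖f y‖ ≤ ‖f y - f x‖ + ‖f x‖ := by simpa using norm_add_le (f y - f x) (f x)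
      _ < 1 + M := add_lt_add (hUf y hy f hf) (hMf f hf)
      _ = M + 1 := by ring
  choose p hp1 hp2 hp3 hp4 using hdata
  obtain ⟨t, ht⟩ := hK.elim_finite_subcover (fun x => (p x).2) (fun x => hp2 x)
    (fun x hx => Set.mem_iUnion.mpr ⟨x, hp3 x⟩)
  set M : ℝ := 1 + ∑ x ∈ t, |(p x).1| with hMdef
  have hM1 : (1 : ℝ) ≤ M := by
    have : (0 : ℝ) ≤ ∑ x ∈ t, |(p x).1| :=
      Finset.sum_nonneg fun x _ => abs_nonneg _
    linarith
  have hMt : ∀ x ∈ t, (p x).1 ≤ M := by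
    intro x hx
    have h1 : (p x).1 ≤ |(p x).1| := le_abs_self _
    have h2 : |(p x).1| ≤ ∑ y ∈ t, |(p y).1| :=
      Finset.single_le_sum (f := fun y => |(p y).1|) (fun y _ => abs_nonneg _) hx
    linarith
  have hbound : ∀ f ∈ F, ∀ y : X, ‖f y‖ ≤ M := by
    intro f hf y
    by_cases hyK : y ∈ K
    · obtain ⟨x, hxt, hyx⟩ := Set.mem_iUnion₂.mp (ht hyK)
      exact (hp4 x y hyx f hf).le.trans (hMt x hxt)
    · exact (hKbound f hf y hyK).le.trans hM1
  refine ⟨M, fun f hf => ?_⟩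
  rw [← ZeroAtInftyContinuousMap.norm_toBCF_eq_norm]
  exact (BoundedContinuousFunction.norm_le (by linarith)).mpr (hbound f hf)
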